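/- Let d ≥ 2, let L be a finite set of affine functions ℝ^{d−1} → ℝ (each representing a non-vertical hyperplane in ℝ^d given by its graph), and let g : ℝ^{d−1} → ℝ be an affine function. Then the graph of g is contained in the corridor corr(L) if and only if g belongs to the convex hull of L, taken in the real vector space of affine functions ℝ^{d−1} → ℝ. -/

import Mathlib

noncomputable section

/-- The corridor of a set `L` of affine functions `ℝ^{d-1} → ℝ` (each representing a
non-vertical hyperplane in `ℝ^d` via its graph): the union of the graphs of all convex
combinations of functions in `L` (taken in the vector space of affine functions). -/
def corrD {E : Type*} [AddCommGroup E] [Module ℝ E]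
    (L : Set (E →ᵃ[ℝ] ℝ)) : Set (E × ℝ) :=
  {p | ∃ h ∈ convexHull ℝ L, p.2 = h p.1}

/-- The graph of an affine function `g : ℝ^{d-1} → ℝ`, a non-vertical hyperplane in `ℝ^d`. -/
def affGraph {E : Type*} [AddCommGroup E] [Module ℝ E]
    (g : E →ᵃ[ℝ] ℝ) : Set (E × ℝ) :=
  {p | p.2 = g p.1}

namespace CorrAux

variable {n : ℕ}

/-- Evaluation at a point, as a linear map on affine maps. -/
def evalL (x : Fin n → ℝ) : ((Fin n → ℝ) →ᵃ[ℝ] ℝ) →ₗ[ℝ] ℝ where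
  toFun v := v x
  map_add' v w := by simp [AffineMap.coe_add]
  map_smul' c v := by simp [AffineMap.coe_smul]

/-- Embedding of affine maps by values at basis vectors and at 0. -/
def Φ : ((Fin n → ℝ) →ᵃ[ℝ] ℝ) →ₗ[ℝ] (Fin n → ℝ) × ℝ where
  toFun v := (fun i => v (Pi.single i 1), v 0)
  map_add' v w := by
    refine Prod.ext (funext fun i => ?_) ?_ <;> simp [AffineMap.coe_add]
  map_smul' c v := by
    refine Prod.ext (funext fun i => ?_) ?_ <;> simp [AffineMap.coe_smul]

lemma single_eq (i : Fin n) : (fun j => if i = j then (1:ℝ) else 0) = Pi.single i 1 := by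
  funext j; simp [Pi.single_apply, eq_comm]

lemma Φ_injective : Function.Injective (Φ (n := n)) := by
  refine (injective_iff_map_eq_zero _).2 fun v hv => ?_
  have h0 : v 0 = 0 := congrArg Prod.snd hv
  have hi : ∀ i, v (Pi.single i 1) = 0 := fun i => congrFun (congrArg Prod.fst hv) i
  have hlin : ∀ i : Fin n, v.linear (Pi.single i 1) = 0 := by
    intro i
    have h := congrFun (AffineMap.decomp v) (Pi.single i 1)
    simp only [Pi.add_apply] at h
    have := hi i
    rw [h, h0, add_zero] at this
    exact this
  ext x
  have hx := congrFun (AffineMap.decomp v) x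
  simp only [Pi.add_apply] at hx
  have : v.linear x = 0 := by
    rw [LinearMap.pi_apply_eq_sum_univ v.linear x]
    refine Finset.sum_eq_zero fun i _ => ?_
    rw [single_eq, hlin i, smul_zero]
  simp [hx, this, h0]

lemma key (f : ((Fin n → ℝ) × ℝ) →L[ℝ] ℝ) :
    ∃ (A : ℝ) (β : Fin n → ℝ), ∀ v : ((Fin n → ℝ) →ᵃ[ℝ] ℝ),
      f (Φ v) = A * v 0 + v.linear β := by
  set c : Fin n → ℝ := fun i => f (Pi.single i 1, 0) with hc
  refine ⟨f (0, 1) + ∑ i, c i, c, fun v => ?_⟩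
  have hsplit : f (Φ v) = f ((fun i => v (Pi.single i 1)), 0) + v 0 * f (0, 1) := by
    have : (Φ v : (Fin n → ℝ) × ℝ)
        = ((fun i => v (Pi.single i 1)), 0) + (v 0) • ((0 : Fin n → ℝ), (1:ℝ)) := by
      refine Prod.ext ?_ ?_ <;> simp [Φ]
    rw [this, map_add, map_smul, smul_eq_mul]
  set f1 : (Fin n → ℝ) →ₗ[ℝ] ℝ := (f : ((Fin n → ℝ) × ℝ) →ₗ[ℝ] ℝ).comp (LinearMap.inl ℝ _ _)
    with hf1
  have hf1app : ∀ a : Fin n → ℝ, f (a, 0) = ∑ i, a i * c i := by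
    intro a
    have h := LinearMap.pi_apply_eq_sum_univ f1 a
    simp only [hf1, LinearMap.comp_apply, LinearMap.inl_apply] at h
    calc f (a, 0) = ∑ i, a i • f ((fun j => if i = j then (1:ℝ) else 0), 0) := h
      _ = ∑ i, a i * c i := Finset.sum_congr rfl fun i _ => by rw [single_eq, smul_eq_mul]
  have hval : ∀ i, v (Pi.single i 1) = v.linear (Pi.single i 1) + v 0 := by
    intro i
    have := congrFun (AffineMap.decomp v) (Pi.single i 1)
    simpa using this
  have hlinc : v.linear c = ∑ i, c i * v.linear (Pi.single i 1) := by
    rw [LinearMap.pi_apply_eq_sum_univ v.linear c]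
    refine Finset.sum_congr rfl fun i _ => ?_
    rw [single_eq, smul_eq_mul]
  rw [hsplit, hf1app, hlinc]
  have : ∑ i, v (Pi.single i 1) * c i
      = ∑ i, (v.linear (Pi.single i 1) * c i + v 0 * c i) := by
    refine Finset.sum_congr rfl fun i _ => ?_
    rw [hval i]; ring
  rw [this, Finset.sum_add_distrib, ← Finset.mul_sum]
  have h2 : ∑ i, c i * v.linear (Pi.single i 1) = ∑ i, v.linear (Pi.single i 1) * c i :=
    Finset.sum_congr rfl fun i _ => mul_comm _ _
  rw [h2]; ring

end CorrAux

open CorrAux in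
/-- A non-vertical hyperplane is contained in the corridor of `L` iff the corresponding affine
function lies in the convex hull of `L`. -/
theorem hyperplane_in_corridor_iff_mem_convexHull :
    ∀ d : ℕ, 2 ≤ d →
      ∀ L : Finset ((Fin (d - 1) → ℝ) →ᵃ[ℝ] ℝ),
        ∀ g : (Fin (d - 1) → ℝ) →ᵃ[ℝ] ℝ,
          affGraph g ⊆ corrD (↑L) ↔ g ∈ convexHull ℝ (↑L : Set _) := by
  intro d _ L g
  constructor
  · intro H
    rcases L.eq_empty_or_nonempty with hL | hL
    · exfalso
      obtain ⟨h, hh, -⟩ := H (show ((0 : Fin (d-1) → ℝ), g 0) ∈ affGraph g from rfl)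
      rw [hL] at hh
      simp at hh
    · by_contra hg
      have hΦg : Φ g ∉ convexHull ℝ (Φ '' (↑L : Set _)) := by
        rw [← Φ.image_convexHull]
        rintro ⟨h, hh, he⟩
        exact hg (Φ_injective he ▸ hh)
      obtain ⟨f, u, hfu, hub⟩ := geometric_hahn_banach_point_closed
        (convex_convexHull ℝ _) ((L.finite_toSet.image _).isClosed_convexHull ℝ) hΦg
      obtain ⟨A, β, hk⟩ := key f
      have hx : ∀ h ∈ convexHull ℝ (↑L : Set _), u < f (Φ h) := fun h hh =>
        hub _ (by rw [← Φ.image_convexHull]; exact Set.mem_image_of_mem _ hh)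
      have heval : ∀ (h : (Fin (d-1) → ℝ) →ᵃ[ℝ] ℝ) (x : Fin (d-1) → ℝ),
          h x = h.linear x + h 0 := fun h x => by
        have := congrFun (AffineMap.decomp h) x; simpa using this
      by_cases hA : A = 0
      · -- case A = 0 : evaluate far along β
        set m := L.inf' hL (fun l => l 0) with hm
        have hmle : ∀ h ∈ convexHull ℝ (↑L : Set ((Fin (d-1) → ℝ) →ᵃ[ℝ] ℝ)), m ≤ h 0 := by
          intro h hh
          have hsub : convexHull ℝ (↑L : Set _) ⊆ {v | m ≤ evalL 0 v} :=
            convexHull_min (fun l hl => by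
                show m ≤ evalL 0 l
                exact L.inf'_le _ (Finset.mem_coe.1 hl))
              (convex_halfSpace_ge (evalL (n := d-1) 0).isLinear m)
          exact hsub hh
        set ε := u - f (Φ g) with hε
        have hε0 : 0 < ε := by simp only [hε]; linarith
        set t := (max (g 0 - m) 0 + 1) / ε with ht
        have ht0 : 0 ≤ t := by positivity
        have htε : g 0 - m + 1 ≤ t * ε := by
          rw [ht, div_mul_cancel₀ _ (ne_of_gt hε0)]
          have := le_max_left (g 0 - m) 0
          linarith
        obtain ⟨h, hh, hval⟩ := H (show (t • β, g (t • β)) ∈ affGraph g from rfl)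
        have h1 : u < f (Φ h) := hx h hh
        have hfw : f (Φ (h - g)) = (h - g).linear β := by
          rw [hk, hA, zero_mul, zero_add]
        have hfw' : f (Φ (h - g)) = f (Φ h) - f (Φ g) := by
          rw [map_sub, map_sub]
        have h2 : ε ≤ (h - g).linear β := by rw [← hfw, hfw']; linarith
        have h4 : (h - g) (t • β) = 0 := by
          rw [AffineMap.coe_sub, Pi.sub_apply, ← hval, sub_self]
        have h3 : (h - g) (t • β) = (h - g) 0 + t * (h - g).linear β := by
          rw [heval (h - g) (t • β), LinearMap.map_smul, smul_eq_mul]; ring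
        have h5 : m - g 0 ≤ (h - g) 0 := by
          have := hmle h hh
          rw [AffineMap.coe_sub, Pi.sub_apply]
          linarith
        have h6 : t * ε ≤ t * (h - g).linear β := by
          exact mul_le_mul_of_nonneg_left h2 ht0
        rw [h3] at h4
        linarith
      · -- case A ≠ 0 : evaluate at A⁻¹ • β
        obtain ⟨h, hh, hval⟩ := H (show (A⁻¹ • β, g (A⁻¹ • β)) ∈ affGraph g from rfl)
        have h1 : u < f (Φ h) := hx h hh
        have hfw : f (Φ (h - g)) = A * (h - g) 0 + (h - g).linear β := hk _
        have hfw' : f (Φ (h - g)) = f (Φ h) - f (Φ g) := by rw [map_sub, map_sub]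
        have h4 : (h - g) (A⁻¹ • β) = 0 := by
          rw [AffineMap.coe_sub, Pi.sub_apply, ← hval, sub_self]
        have h3 : (h - g) (A⁻¹ • β) = (h - g) 0 + A⁻¹ * (h - g).linear β := by
          rw [heval (h - g) (A⁻¹ • β), LinearMap.map_smul, smul_eq_mul]; ring
        rw [h3] at h4
        have h5 : A * (h - g) 0 + (h - g).linear β = 0 := by
          have := congrArg (fun y => A * y) h4
          simp only [mul_zero] at this
          rw [mul_add, ← mul_assoc, mul_inv_cancel₀ hA, one_mul] at this
          linarith
        rw [h5] at hfw
        rw [hfw'] at hfw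
        linarith
  · intro hg p hp
    exact ⟨g, hg, hp⟩

end
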